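/- (Dispersive decay at rate t^{−1/3} for the Airy equation.) There exists a constant C > 0 such that for every Schwartz function u₀ : ℝ → ℂ and every t > 0, the solution of the Airy equation given by the Fourier representation u(t,x) := ∫_ℝ û₀(ξ) e^{i(tξ³ + xξ)} dξ, where û₀(ξ) := (1/2π) ∫_ℝ u₀(y) e^{−iyξ} dy, satisfies sup_{x ∈ ℝ} |u(t,x)| ≤ C t^{−1/3} ∫_ℝ |u₀(y)| dy. -/

import Mathlib

open MeasureTheory


open MeasureTheory Complex intervalIntegral Set Filter Real FourierTransform Topology

noncomputable def eph (t a η : ℝ) : ℂ := Complex.exp (Complex.I * ((t * η^3 + a * η : ℝ) : ℂ))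

lemma eph_deriv (t a η : ℝ) :
    HasDerivAt (eph t a) (eph t a η * (Complex.I * ((3*t*η^2 + a : ℝ) : ℂ))) η := by
  have hr : HasDerivAt (fun η : ℝ => t * η^3 + a * η) (3*t*η^2 + a) η := by
    have h1 : HasDerivAt (fun η : ℝ => η^3) (3*η^2) η := by
      simpa using (hasDerivAt_pow 3 η)
    have := ((h1.const_mul t).add ((hasDerivAt_id η).const_mul a))
    exact this.congr_deriv (by ring)
  exact ((hr.ofReal_comp).const_mul Complex.I).cexp

lemma eph_norm (t a η : ℝ) : ‖eph t a η‖ = 1 := by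
  have h : (Complex.I * ((t * η^3 + a * η : ℝ) : ℂ)).re = 0 := by
    simp only [Complex.mul_re, Complex.I_re, Complex.I_im, Complex.ofReal_re, Complex.ofReal_im]
    ring
  rw [eph, Complex.norm_exp, h, Real.exp_zero]

lemma eph_abs (t a η : ℝ) : ‖eph t a η‖ = 1 := eph_norm t a η

lemma eph_cont (t a : ℝ) : Continuous (eph t a) := by
  unfold eph; fun_prop

lemma phd_deriv (t a η : ℝ) : HasDerivAt (fun η : ℝ => 3*t*η^2 + a) (6*t*η) η := by
  have h1 : HasDerivAt (fun η : ℝ => η^2) (2*η) η := by simpa using (hasDerivAt_pow 2 η)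
  have := ((h1.const_mul (3*t)).add_const a)
  exact this.congr_deriv (by ring)

lemma fdt {t a ρ c d : ℝ} (hρ : 0 < ρ) (hcd : c ≤ d) (hc : 0 ≤ c) (ht : 0 ≤ t)
    (hsign : (∀ η ∈ Set.Icc c d, ρ ≤ 3*t*η^2 + a) ∨ (∀ η ∈ Set.Icc c d, 3*t*η^2 + a ≤ -ρ)) :
    ‖∫ η in c..d, eph t a η‖ ≤ 3/ρ := by
  set φ' : ℝ → ℝ := fun η => 3*t*η^2 + a with hφ'
  have habs : ∀ η ∈ Set.Icc c d, ρ ≤ |φ' η| := by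
    intro η hη
    rcases hsign with hs | hs
    · exact le_trans (hs η hη) (le_abs_self _)
    · have h2 : φ' η ≤ -ρ := hs η hη
      calc ρ ≤ -(φ' η) := by linarith
        _ ≤ |φ' η| := neg_le_abs _
  have hne : ∀ η ∈ Set.Icc c d, φ' η ≠ 0 := by
    intro η hη h0
    have := habs η hη; rw [h0] at this; simp at this; linarith
  set w : ℝ → ℂ := fun η => Complex.I * ((φ' η : ℝ) : ℂ) with hw
  have hwne : ∀ η ∈ Set.Icc c d, w η ≠ 0 := fun η hη =>
    mul_ne_zero Complex.I_ne_zero (Complex.ofReal_ne_zero.mpr (hne η hη))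
  set g : ℝ → ℂ := fun η => eph t a η * (w η)⁻¹ with hg
  set h : ℝ → ℂ := fun η => eph t a η * (Complex.I * ((6*t*η : ℝ) : ℂ)) * ((w η)^2)⁻¹ with hh
  have hwderiv : ∀ η : ℝ, HasDerivAt w (Complex.I * ((6*t*η : ℝ) : ℂ)) η := fun η =>
    ((phd_deriv t a η).ofReal_comp).const_mul Complex.I
  have hgderiv : ∀ η ∈ Set.Icc c d, HasDerivAt g (eph t a η - h η) η := by
    intro η hη
    have hinv : HasDerivAt (fun η => (w η)⁻¹)
        (-((w η)^2)⁻¹ * (Complex.I * ((6*t*η : ℝ) : ℂ))) η :=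
      (hasDerivAt_inv (hwne η hη)).comp η (hwderiv η)
    have hd := (eph_deriv t a η).mul hinv
    have hwη : w η ≠ 0 := hwne η hη
    refine hd.congr_deriv ?_; symm
    show eph t a η - h η =
      eph t a η * (w η) * (w η)⁻¹ + eph t a η * (-((w η)^2)⁻¹ * (Complex.I * ((6*t*η : ℝ) : ℂ)))
    rw [mul_assoc, mul_inv_cancel₀ hwη, mul_one]
    simp only [hh]
    ring
  have hcont : ContinuousOn h (Set.Icc c d) := by
    apply ContinuousOn.mul
    · exact ContinuousOn.mul (eph_cont t a).continuousOn (by fun_prop)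
    · exact ContinuousOn.inv₀ (by fun_prop) (fun η hη => pow_ne_zero 2 (hwne η hη))
  have hih : IntervalIntegrable h volume c d := by
    apply ContinuousOn.intervalIntegrable
    rwa [Set.uIcc_of_le hcd]
  have hie : IntervalIntegrable (eph t a) volume c d := (eph_cont t a).intervalIntegrable c d
  have hftc : ∫ η in c..d, (eph t a η - h η) = g d - g c := by
    apply intervalIntegral.integral_eq_sub_of_hasDerivAt
    · intro η hη
      rw [Set.uIcc_of_le hcd] at hη
      exact hgderiv η hη
    · exact hie.sub hih
  have hsplit : ∫ η in c..d, eph t a η = (g d - g c) + ∫ η in c..d, h η := by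
    rw [← hftc, intervalIntegral.integral_sub hie hih]; ring
  have hgnorm : ∀ η ∈ Set.Icc c d, ‖g η‖ ≤ 1/ρ := by
    intro η hη
    have : ‖g η‖ = |φ' η|⁻¹ := by
      simp only [hg, hw, norm_mul, norm_inv, eph_norm, one_mul, map_mul,
        Complex.norm_I, Complex.norm_real, Real.norm_eq_abs]
    rw [this, one_div]
    exact inv_anti₀ hρ (habs η hη)
  have hnormh : ∀ η ∈ Set.Icc c d, ‖h η‖ = 6*t*η/(φ' η)^2 := by
    intro η hη
    have h6 : (0:ℝ) ≤ 6*t*η := by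
      have hη0 : (0:ℝ) ≤ η := le_trans hc hη.1
      positivity
    simp only [hh, hw, norm_mul, norm_inv, norm_pow, map_mul,
      Complex.norm_I, Complex.norm_real, Real.norm_eq_abs, one_mul]
    rw [abs_of_nonneg ht, abs_of_nonneg (le_trans hc hη.1), _root_.sq_abs, abs_of_pos (by norm_num : (0:ℝ) < 6), eph_abs]
    ring
  have hGderiv : ∀ η ∈ Set.Icc c d, HasDerivAt (fun η => -(φ' η)⁻¹) (6*t*η/(φ' η)^2) η := by
    intro η hη
    have := ((phd_deriv t a η).inv (hne η hη)).neg
    exact this.congr_deriv (by simp only [hφ']; ring)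
  have hinth : ∫ η in c..d, ‖h η‖ = (φ' c)⁻¹ - (φ' d)⁻¹ := by
    have hcongr : Set.EqOn (fun η => ‖h η‖) (fun η => 6*t*η/(φ' η)^2) (Set.uIcc c d) := by
      rw [Set.uIcc_of_le hcd]; intro η hη; exact hnormh η hη
    rw [intervalIntegral.integral_congr hcongr]
    have : ∫ η in c..d, 6*t*η/(φ' η)^2 = (fun η => -(φ' η)⁻¹) d - (fun η => -(φ' η)⁻¹) c := by
      apply intervalIntegral.integral_eq_sub_of_hasDerivAt
      · intro η hη; rw [Set.uIcc_of_le hcd] at hη; exact hGderiv η hη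
      · apply ContinuousOn.intervalIntegrable
        rw [Set.uIcc_of_le hcd]
        apply ContinuousOn.div (by fun_prop) (by fun_prop)
        exact fun η hη => pow_ne_zero 2 (hne η hη)
    rw [this]; ring
  have hbound : (φ' c)⁻¹ - (φ' d)⁻¹ ≤ 1/ρ := by
    have hcm : c ∈ Set.Icc c d := ⟨le_refl c, hcd⟩
    have hdm : d ∈ Set.Icc c d := ⟨hcd, le_refl d⟩
    rcases hsign with hs | hs
    · have h1 : ρ ≤ φ' c := hs c hcm
      have h2 : ρ ≤ φ' d := hs d hdm
      have h3 : (φ' c)⁻¹ ≤ ρ⁻¹ := inv_anti₀ hρ h1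
      have h4 : 0 < (φ' d)⁻¹ := inv_pos.mpr (lt_of_lt_of_le hρ h2)
      rw [one_div]; linarith
    · have h1 : φ' c ≤ -ρ := hs c hcm
      have h2 : φ' d ≤ -ρ := hs d hdm
      have h3 : ρ ≤ -(φ' d) := by linarith
      have h4 : (-(φ' d))⁻¹ ≤ ρ⁻¹ := inv_anti₀ hρ h3
      have h5 : (φ' c)⁻¹ < 0 := inv_neg''.mpr (by linarith)
      rw [inv_neg] at h4
      rw [one_div]; linarith
  calc ‖∫ η in c..d, eph t a η‖ = ‖(g d - g c) + ∫ η in c..d, h η‖ := by rw [hsplit]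
    _ ≤ ‖g d - g c‖ + ‖∫ η in c..d, h η‖ := norm_add_le _ _
    _ ≤ (‖g d‖ + ‖g c‖) + ∫ η in c..d, ‖h η‖ := by
        gcongr
        · exact norm_sub_le _ _
        · exact intervalIntegral.norm_integral_le_integral_norm hcd
    _ ≤ (1/ρ + 1/ρ) + 1/ρ := by
        gcongr
        · exact hgnorm d ⟨hcd, le_refl d⟩
        · exact hgnorm c ⟨le_refl c, hcd⟩
        · rw [hinth]; exact hbound
    _ = 3/ρ := by ring

set_option maxHeartbeats 1000000 in
lemma sdt {t a c d : ℝ} (ht : 0 < t) (hm : t ^ (-(1:ℝ)/3) ≤ c) (hcd : c ≤ d) :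
    ‖∫ η in c..d, eph t a η‖ ≤ 4 * t ^ (-(1:ℝ)/3) := by
  set m : ℝ := t ^ (-(1:ℝ)/3) with hmdef
  set ρ : ℝ := 3 * t ^ ((1:ℝ)/3) with hρdef
  have hx : (0:ℝ) < t ^ ((1:ℝ)/3) := Real.rpow_pos_of_pos ht _
  have hmpos : 0 < m := Real.rpow_pos_of_pos ht _
  have hρpos : 0 < ρ := by positivity
  have hc0 : 0 ≤ c := le_trans hmpos.le hm
  have h3ρ : 3 / ρ = m := by
    rw [hρdef, hmdef, show -(1:ℝ)/3 = -(1/3) by norm_num, Real.rpow_neg ht.le]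
    field_simp
  have hρm : ρ = 3*t*m^2 := by
    have e1 : m^2 = t ^ (-(2:ℝ)/3) := by
      rw [hmdef, sq, ← Real.rpow_add ht]; norm_num
    rw [e1, hρdef]
    have e2 : t * t ^ (-(2:ℝ)/3) = t ^ ((1:ℝ)/3) := by
      nth_rewrite 1 [← Real.rpow_one t]
      rw [← Real.rpow_add ht]; norm_num
    rw [mul_assoc, e2]
  have h3t : (0:ℝ) < 3*t := by linarith
  set X₁ : ℝ := (-ρ - a)/(3*t) with hX₁
  set X₂ : ℝ := (ρ - a)/(3*t) with hX₂
  set η₁ : ℝ := Real.sqrt (max 0 X₁) with hη₁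
  set η₂ : ℝ := Real.sqrt (max 0 X₂) with hη₂
  have hη₁nn : 0 ≤ η₁ := Real.sqrt_nonneg _
  have hη₂nn : 0 ≤ η₂ := Real.sqrt_nonneg _
  have hη12 : η₁ ≤ η₂ := by
    apply Real.sqrt_le_sqrt
    apply max_le_max (le_refl 0)
    exact (div_le_div_iff_of_pos_right h3t).mpr (by linarith)
  set b₁ : ℝ := min d (max c η₁) with hb₁
  set b₂ : ℝ := min d (max c η₂) with hb₂
  have hcb₁ : c ≤ b₁ := le_min hcd (le_max_left _ _)
  have hb12 : b₁ ≤ b₂ := min_le_min (le_refl d) (max_le_max (le_refl c) hη12)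
  have hb₂d : b₂ ≤ d := min_le_left _ _
  have hcb₂ : c ≤ b₂ := le_min hcd (le_max_left _ _)
  -- left piece
  have hleft : ‖∫ η in c..b₁, eph t a η‖ ≤ m := by
    rcases eq_or_lt_of_le hcb₁ with heq | hlt
    · rw [← heq]; simp [intervalIntegral.integral_same]; exact hmpos.le
    · have hcη : c < η₁ := by
        by_contra hcon
        push_neg at hcon
        have : max c η₁ = c := max_eq_left hcon
        rw [hb₁, this] at hlt
        have := min_le_right d c
        linarith
      have hb₁η : b₁ ≤ η₁ := le_trans (min_le_right _ _) (le_of_eq (max_eq_right hcη.le))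
      have hη₁pos : 0 < η₁ := lt_of_le_of_lt hc0 hcη
      have hX₁pos : 0 < X₁ := by
        have := Real.sqrt_pos.mp (hη₁ ▸ hη₁pos)
        rcases lt_max_iff.mp this with h | h
        · exact absurd h (lt_irrefl 0)
        · exact h
      have hsq : η₁^2 = X₁ := by
        rw [hη₁, Real.sq_sqrt (le_max_left 0 X₁), max_eq_right hX₁pos.le]
      have hXval : 3*t*X₁ = -ρ - a := by
        rw [hX₁]; field_simp
      have hb : ‖∫ η in c..b₁, eph t a η‖ ≤ 3/ρ := by
        apply fdt hρpos hcb₁ hc0 ht.le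
        right
        intro η hη
        have h0η : 0 ≤ η := le_trans hc0 hη.1
        have hηη₁ : η ≤ η₁ := le_trans hη.2 hb₁η
        have : η^2 ≤ X₁ := by rw [← hsq]; exact pow_le_pow_left₀ h0η hηη₁ 2
        nlinarith
      rwa [h3ρ] at hb
  -- right piece
  have hright : ‖∫ η in b₂..d, eph t a η‖ ≤ m := by
    rcases eq_or_lt_of_le hb₂d with heq | hlt
    · rw [heq]; simp [intervalIntegral.integral_same]; exact hmpos.le
    · have hb₂eq : b₂ = max c η₂ := by
        rcases min_cases d (max c η₂) with ⟨h1, h2⟩ | ⟨h1, h2⟩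
        · rw [hb₂] at hlt; rw [h1] at hlt; exact absurd hlt (lt_irrefl d)
        · exact h1
      have hη₂b : η₂ ≤ b₂ := hb₂eq ▸ le_max_right _ _
      have hb : ‖∫ η in b₂..d, eph t a η‖ ≤ 3/ρ := by
        apply fdt hρpos hb₂d (le_trans hc0 hcb₂) ht.le
        left
        intro η hη
        have h0η : 0 ≤ η₂ := hη₂nn
        have hηη₂ : η₂ ≤ η := le_trans hη₂b hη.1
        have hXle : X₂ ≤ η₂^2 := by
          rw [hη₂, Real.sq_sqrt (le_max_left 0 X₂)]
          exact le_max_right _ _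
        have h2 : η₂^2 ≤ η^2 := pow_le_pow_left₀ h0η hηη₂ 2
        have hXval : 3*t*X₂ = ρ - a := by rw [hX₂]; field_simp
        nlinarith
      rwa [h3ρ] at hb
  -- middle piece
  have hmid : ‖∫ η in b₁..b₂, eph t a η‖ ≤ 2*m := by
    have h1 : ‖∫ η in b₁..b₂, eph t a η‖ ≤ b₂ - b₁ := by
      calc ‖∫ η in b₁..b₂, eph t a η‖ ≤ ∫ η in b₁..b₂, ‖eph t a η‖ :=
            intervalIntegral.norm_integral_le_integral_norm hb12
        _ = ∫ η in b₁..b₂, (1:ℝ) := by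
            apply intervalIntegral.integral_congr
            intro η _; exact eph_norm t a η
        _ = b₂ - b₁ := by simp
    have h2 : b₂ - b₁ ≤ max c η₂ - max c η₁ := by
      rcases le_total d (max c η₁) with h | h
      · have hd2 : d ≤ max c η₂ := le_trans h (max_le_max (le_refl c) hη12)
        have e1 : b₁ = d := min_eq_left h
        have e2 : b₂ = d := min_eq_left hd2
        rw [e1, e2]
        have := max_le_max (le_refl c) hη12
        linarith
      · have e1 : b₁ = max c η₁ := min_eq_right h
        have e2 : b₂ ≤ max c η₂ := min_le_right _ _
        linarith
    have h3 : max c η₂ - max c η₁ ≤ η₂ - η₁ := by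
      rcases le_total η₂ c with h | h
      · have e1 : max c η₂ = c := max_eq_left h
        have e2 : max c η₁ = c := max_eq_left (le_trans hη12 h)
        rw [e1, e2]; linarith
      · have e1 : max c η₂ = η₂ := max_eq_right h
        have e2 : η₁ ≤ max c η₁ := le_max_right _ _
        linarith
    have h4 : η₂ ≤ η₁ + 2*m := by
      have hXd : X₂ = X₁ + 2*m^2 := by
        have : ρ/(3*t) = m^2 := by rw [hρm]; field_simp
        rw [hX₂, hX₁, ← this]; field_simp; ring
      have hXle : max 0 X₂ ≤ max 0 X₁ + 2*m^2 := by
        rcases le_total X₂ 0 with h | h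
        · have : max 0 X₂ = 0 := max_eq_left h
          rw [this]; positivity
        · have : max 0 X₂ = X₂ := max_eq_right h
          rw [this, hXd]
          have := le_max_right 0 X₁
          linarith
      have hsq1 : η₁^2 = max 0 X₁ := Real.sq_sqrt (le_max_left 0 X₁)
      have h1' : max 0 X₂ ≤ (η₁ + 2*m)^2 := by
        have expand : (η₁ + 2*m)^2 = η₁^2 + 4*m*η₁ + 4*m^2 := by ring
        rw [expand, hsq1]
        have hmη : 0 ≤ 4*m*η₁ := by positivity
        have hmm : 0 ≤ m^2 := sq_nonneg m
        linarith
      calc η₂ = Real.sqrt (max 0 X₂) := hη₂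
        _ ≤ Real.sqrt ((η₁ + 2*m)^2) := Real.sqrt_le_sqrt h1'
        _ = η₁ + 2*m := Real.sqrt_sq (by positivity)
    linarith
  -- assemble
  have hi1 : IntervalIntegrable (eph t a) volume c b₁ := (eph_cont t a).intervalIntegrable _ _
  have hi2 : IntervalIntegrable (eph t a) volume b₁ b₂ := (eph_cont t a).intervalIntegrable _ _
  have hi3 : IntervalIntegrable (eph t a) volume b₂ d := (eph_cont t a).intervalIntegrable _ _
  have e1 : (∫ η in c..b₁, eph t a η) + (∫ η in b₁..b₂, eph t a η) = ∫ η in c..b₂, eph t a η :=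
    intervalIntegral.integral_add_adjacent_intervals hi1 hi2
  have e2 : (∫ η in c..b₂, eph t a η) + (∫ η in b₂..d, eph t a η) = ∫ η in c..d, eph t a η :=
    intervalIntegral.integral_add_adjacent_intervals (hi1.trans hi2) hi3
  calc ‖∫ η in c..d, eph t a η‖
      = ‖((∫ η in c..b₁, eph t a η) + (∫ η in b₁..b₂, eph t a η)) + (∫ η in b₂..d, eph t a η)‖ := by
        rw [e1, e2]
    _ ≤ ‖(∫ η in c..b₁, eph t a η) + (∫ η in b₁..b₂, eph t a η)‖ + ‖∫ η in b₂..d, eph t a η‖ :=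
        norm_add_le _ _
    _ ≤ (‖∫ η in c..b₁, eph t a η‖ + ‖∫ η in b₁..b₂, eph t a η‖) + ‖∫ η in b₂..d, eph t a η‖ := by
        gcongr
        exact norm_add_le _ _
    _ ≤ (m + 2*m) + m := add_le_add (add_le_add hleft hmid) hright
    _ = 4*m := by ring

lemma eph_neg (t a η : ℝ) : eph t a (-η) = (starRingEnd ℂ) (eph t a η) := by
  rw [eph, eph, ← Complex.exp_conj]
  congr 1
  rw [map_mul, Complex.conj_I, Complex.conj_ofReal]
  push_cast
  ring

lemma interval_norm_le (t a c d : ℝ) (hcd : c ≤ d) :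
    ‖∫ η in c..d, eph t a η‖ ≤ d - c := by
  calc ‖∫ η in c..d, eph t a η‖ ≤ ∫ η in c..d, ‖eph t a η‖ :=
        intervalIntegral.norm_integral_le_integral_norm hcd
    _ = ∫ η in c..d, (1:ℝ) := intervalIntegral.integral_congr (fun η _ => eph_norm t a η)
    _ = d - c := by simp

lemma kernel_bound_nonneg {t a R : ℝ} (ht : 0 < t) (hR : 0 ≤ R) :
    ‖∫ η in (-R)..R, eph t a η‖ ≤ 10 * t ^ (-(1:ℝ)/3) := by
  set m : ℝ := t ^ (-(1:ℝ)/3) with hmdef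
  have hmpos : 0 < m := Real.rpow_pos_of_pos ht _
  rcases le_total R m with h | h
  · have := interval_norm_le t a (-R) R (by linarith)
    linarith
  · have hi1 : IntervalIntegrable (eph t a) volume (-R) (-m) := (eph_cont t a).intervalIntegrable _ _
    have hi2 : IntervalIntegrable (eph t a) volume (-m) m := (eph_cont t a).intervalIntegrable _ _
    have hi3 : IntervalIntegrable (eph t a) volume m R := (eph_cont t a).intervalIntegrable _ _
    have e1 : (∫ η in (-R)..(-m), eph t a η) + (∫ η in (-m)..m, eph t a η)
        = ∫ η in (-R)..m, eph t a η := intervalIntegral.integral_add_adjacent_intervals hi1 hi2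
    have e2 : (∫ η in (-R)..m, eph t a η) + (∫ η in m..R, eph t a η)
        = ∫ η in (-R)..R, eph t a η :=
      intervalIntegral.integral_add_adjacent_intervals (hi1.trans hi2) hi3
    have h3 : ‖∫ η in m..R, eph t a η‖ ≤ 4*m := sdt ht (le_refl m) h
    have h2 : ‖∫ η in (-m)..m, eph t a η‖ ≤ 2*m := by
      have := interval_norm_le t a (-m) m (by linarith)
      linarith
    have h1 : ‖∫ η in (-R)..(-m), eph t a η‖ ≤ 4*m := by
      have hrefl : ∫ η in (-R)..(-m), eph t a η
          = (starRingEnd ℂ) (∫ η in m..R, eph t a η) := by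
        rw [← intervalIntegral.integral_comp_neg (fun η => eph t a η)]
        rw [intervalIntegral.integral_of_le h, intervalIntegral.integral_of_le h, ← integral_conj]
        exact setIntegral_congr_fun measurableSet_Ioc (fun η _ => eph_neg t a η)
      rw [hrefl, RCLike.norm_conj]
      exact h3
    calc ‖∫ η in (-R)..R, eph t a η‖
        = ‖((∫ η in (-R)..(-m), eph t a η) + (∫ η in (-m)..m, eph t a η))
            + (∫ η in m..R, eph t a η)‖ := by rw [e1, e2]
      _ ≤ ‖(∫ η in (-R)..(-m), eph t a η) + (∫ η in (-m)..m, eph t a η)‖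
            + ‖∫ η in m..R, eph t a η‖ := norm_add_le _ _
      _ ≤ (‖∫ η in (-R)..(-m), eph t a η‖ + ‖∫ η in (-m)..m, eph t a η‖)
            + ‖∫ η in m..R, eph t a η‖ := by gcongr; exact norm_add_le _ _
      _ ≤ (4*m + 2*m) + 4*m := add_le_add (add_le_add h1 h2) h3
      _ = 10*m := by ring

lemma kernel_bound (t a R : ℝ) (ht : 0 < t) :
    ‖∫ η in (-R)..R, eph t a η‖ ≤ 10 * t ^ (-(1:ℝ)/3) := by
  rcases le_total 0 R with h | h
  · exact kernel_bound_nonneg ht h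
  · have h2 : ‖∫ η in (-(-R))..(-R), eph t a η‖ ≤ 10 * t ^ (-(1:ℝ)/3) :=
      kernel_bound_nonneg ht (by linarith)
    rw [neg_neg] at h2
    rw [intervalIntegral.integral_symm, norm_neg]
    exact h2

lemma norm_exp_neg_I (y ξ : ℝ) : ‖Complex.exp (-Complex.I * y * ξ)‖ = 1 := by
  have h : (-Complex.I * (y:ℂ) * (ξ:ℂ)).re = 0 := by
    simp [Complex.mul_re, Complex.mul_im]
  rw [Complex.norm_exp, h, Real.exp_zero]

lemma eph_eq (t x ξ : ℝ) :
    Complex.exp (Complex.I * ((t:ℂ) * (ξ:ℂ)^3 + (x:ℂ) * (ξ:ℂ))) = eph t x ξ := by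
  rw [eph]; congr 1; push_cast; ring

lemma exp_combine (t x y ξ : ℝ) :
    Complex.exp (-Complex.I * y * ξ) *
      Complex.exp (Complex.I * ((t:ℂ) * (ξ:ℂ)^3 + (x:ℂ) * (ξ:ℂ))) = eph t (x - y) ξ := by
  rw [← Complex.exp_add, eph]
  congr 1
  push_cast
  ring


set_option maxHeartbeats 1000000 in
/-- Dispersive decay at rate `t^{-1/3}` for the Airy equation: for Schwartz data
`u₀`, the solution `u(t,x) = ∫ û₀(ξ) e^{i(tξ³ + xξ)} dξ`, with
`û₀(ξ) = (1/2π) ∫ u₀(y) e^{-iyξ} dy`, satisfies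
`sup_x |u(t,x)| ≤ C t^{-1/3} ∫ |u₀|` for all `t > 0`. -/
theorem airy_dispersive_decay :
    ∃ C : ℝ, 0 < C ∧
      ∀ u₀ : SchwartzMap ℝ ℂ, ∀ t : ℝ, 0 < t → ∀ x : ℝ,
        ‖(∫ ξ : ℝ,
            (((1 / (2 * Real.pi) : ℝ) : ℂ) *
                ∫ y : ℝ, u₀ y * Complex.exp (-Complex.I * (y : ℂ) * (ξ : ℂ))) *
              Complex.exp (Complex.I * ((t : ℂ) * (ξ : ℂ) ^ 3 + (x : ℂ) * (ξ : ℂ))))‖ ≤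
          C * t ^ (-(1 : ℝ) / 3) * ∫ y : ℝ, ‖u₀ y‖ := by
  refine ⟨2, by norm_num, fun u₀ t ht x => ?_⟩
  set m : ℝ := t ^ (-(1:ℝ)/3) with hmdef
  have hmpos : 0 < m := Real.rpow_pos_of_pos ht _
  have hπ : (0:ℝ) < Real.pi := Real.pi_pos
  set c0 : ℂ := ((1 / (2 * Real.pi) : ℝ) : ℂ) with hc0
  set FT : ℝ → ℂ := fun ξ => ∫ y : ℝ, u₀ y * Complex.exp (-Complex.I * (y:ℂ) * (ξ:ℂ)) with hFT
  set G : ℝ → ℂ := fun ξ =>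
    (c0 * FT ξ) * Complex.exp (Complex.I * ((t:ℂ) * (ξ:ℂ)^3 + (x:ℂ) * (ξ:ℂ))) with hG
  have hFTeq : ∀ ξ : ℝ, FT ξ = 𝓕 (⇑u₀) (ξ * (2*Real.pi)⁻¹) := by
    intro ξ
    rw [Real.fourier_real_eq_integral_exp_smul]
    apply MeasureTheory.integral_congr_ae
    filter_upwards with y
    rw [smul_eq_mul, mul_comm]
    congr 2
    have harg : (-2) * π * y * (ξ * (2*π)⁻¹) = -(y * ξ) := by
      field_simp
    rw [harg]
    push_cast
    ring
  have hFTint : Integrable FT := by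
    have hg : Integrable (𝓕 (⇑u₀)) := by
      rw [← SchwartzMap.fourier_coe]
      exact (𝓕 u₀).integrable
    have h2 := hg.comp_mul_right' (R := (2*Real.pi)⁻¹) (by positivity)
    apply h2.congr
    filter_upwards with ξ
    exact (hFTeq ξ).symm
  have hFTcont : Continuous FT := by
    have h1 : Continuous (𝓕 (⇑u₀)) := by
      rw [← SchwartzMap.fourier_coe]
      exact (𝓕 u₀).continuous
    have h2 : Continuous fun ξ : ℝ => 𝓕 (⇑u₀) (ξ * (2*Real.pi)⁻¹) :=
      h1.comp (continuous_id.mul continuous_const)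
    have h3 : FT = fun ξ => 𝓕 (⇑u₀) (ξ * (2*Real.pi)⁻¹) := funext hFTeq
    rw [h3]; exact h2
  have hGint : Integrable G := by
    have hnorm : Integrable (fun ξ => ‖c0 * FT ξ‖) := (hFTint.const_mul c0).norm
    apply hnorm.mono'
    · apply Continuous.aestronglyMeasurable
      apply Continuous.mul (continuous_const.mul hFTcont)
      have : Continuous fun ξ : ℝ => eph t x ξ := eph_cont t x
      simpa [funext (eph_eq t x)] using this
    · filter_upwards with ξ
      rw [hG, norm_mul, eph_eq, eph_norm, mul_one]
  have htend : Tendsto (fun R : ℝ => ∫ ξ in (-R)..R, G ξ) atTop (𝓝 (∫ ξ, G ξ)) :=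
    intervalIntegral_tendsto_integral hGint tendsto_neg_atTop_atBot tendsto_id
  have hbound : ∀ R : ℝ, 0 ≤ R → ‖∫ ξ in (-R)..R, G ξ‖ ≤ 2 * m * ∫ y, ‖u₀ y‖ := by
    intro R hR
    have hRR : (-R) ≤ R := by linarith
    set μ := volume.restrict (Ioc (-R) R) with hμ
    -- Fubini setup
    have hF2cont : Continuous (fun p : ℝ × ℝ => u₀ p.2 *
        Complex.exp (-Complex.I * (p.2:ℂ) * (p.1:ℂ)) *
        Complex.exp (Complex.I * ((t:ℂ) * (p.1:ℂ)^3 + (x:ℂ) * (p.1:ℂ)))) := by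
      apply Continuous.mul
      · apply Continuous.mul (u₀.continuous.comp continuous_snd)
        apply Complex.continuous_exp.comp
        fun_prop
      · apply Complex.continuous_exp.comp
        fun_prop
    have hF2int : Integrable (Function.uncurry (fun ξ y : ℝ => u₀ y *
        Complex.exp (-Complex.I * (y:ℂ) * (ξ:ℂ)) *
        Complex.exp (Complex.I * ((t:ℂ) * (ξ:ℂ)^3 + (x:ℂ) * (ξ:ℂ))))) (μ.prod volume) := by
      have hmeas : AEStronglyMeasurable (Function.uncurry (fun ξ y : ℝ => u₀ y *
          Complex.exp (-Complex.I * (y:ℂ) * (ξ:ℂ)) *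
          Complex.exp (Complex.I * ((t:ℂ) * (ξ:ℂ)^3 + (x:ℂ) * (ξ:ℂ))))) (μ.prod volume) := by
        apply Continuous.aestronglyMeasurable
        exact hF2cont
      rw [integrable_prod_iff hmeas]
      constructor
      · filter_upwards with ξ
        simp only [Function.uncurry_apply_pair]
        apply (u₀.integrable (μ := volume)).norm.mono'
        · apply Continuous.aestronglyMeasurable
          apply Continuous.mul
          · apply Continuous.mul u₀.continuous
            apply Complex.continuous_exp.comp; fun_prop
          · exact continuous_const
        · filter_upwards with y
          rw [norm_mul, norm_mul, norm_exp_neg_I, eph_eq, eph_norm, mul_one, mul_one]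
      · have heq : (fun ξ : ℝ => ∫ y, ‖u₀ y *
            Complex.exp (-Complex.I * (y:ℂ) * (ξ:ℂ)) *
            Complex.exp (Complex.I * ((t:ℂ) * (ξ:ℂ)^3 + (x:ℂ) * (ξ:ℂ)))‖)
            = fun _ : ℝ => ∫ y, ‖u₀ y‖ := by
          funext ξ
          apply MeasureTheory.integral_congr_ae
          filter_upwards with y
          rw [norm_mul, norm_mul, norm_exp_neg_I, eph_eq, eph_norm, mul_one, mul_one]
        simp only [Function.uncurry_apply_pair]
        rw [heq]
        rw [hμ]
        exact integrableOn_const measure_Ioc_lt_top.ne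
    have hswap := integral_integral_swap hF2int
    -- identify the interval integral
    have e0 : ∫ ξ in (-R)..R, G ξ =
        c0 * ∫ ξ, (∫ y, u₀ y * Complex.exp (-Complex.I * (y:ℂ) * (ξ:ℂ)) *
          Complex.exp (Complex.I * ((t:ℂ) * (ξ:ℂ)^3 + (x:ℂ) * (ξ:ℂ)))) ∂μ := by
      rw [intervalIntegral.integral_of_le hRR, ← hμ]
      rw [← MeasureTheory.integral_const_mul]
      apply MeasureTheory.integral_congr_ae
      filter_upwards with ξ
      simp only [hG, hFT]
      rw [mul_assoc]
      congr 1
      rw [← MeasureTheory.integral_mul_const]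
    have e1 : (∫ y, (∫ ξ, u₀ y * Complex.exp (-Complex.I * (y:ℂ) * (ξ:ℂ)) *
          Complex.exp (Complex.I * ((t:ℂ) * (ξ:ℂ)^3 + (x:ℂ) * (ξ:ℂ))) ∂μ))
        = ∫ y, u₀ y * ∫ ξ in (-R)..R, eph t (x - y) ξ := by
      apply MeasureTheory.integral_congr_ae
      filter_upwards with y
      rw [intervalIntegral.integral_of_le hRR, ← hμ, ← MeasureTheory.integral_const_mul]
      apply MeasureTheory.integral_congr_ae
      filter_upwards with ξ
      rw [mul_assoc, exp_combine]
    have hK : ∀ y : ℝ, ‖∫ ξ in (-R)..R, eph t (x - y) ξ‖ ≤ 10 * m :=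
      fun y => kernel_bound t (x - y) R ht
    calc ‖∫ ξ in (-R)..R, G ξ‖
        = ‖c0‖ * ‖∫ y, u₀ y * ∫ ξ in (-R)..R, eph t (x - y) ξ‖ := by
          rw [e0, hswap, e1, norm_mul]
      _ ≤ ‖c0‖ * ∫ y, ‖u₀ y * ∫ ξ in (-R)..R, eph t (x - y) ξ‖ := by
          gcongr
          exact norm_integral_le_integral_norm _
      _ ≤ ‖c0‖ * ∫ y, ‖u₀ y‖ * (10 * m) := by
          gcongr ‖c0‖ * ?_
          apply integral_mono_of_nonneg
          · filter_upwards with y; positivity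
          · exact (u₀.integrable (μ := volume)).norm.mul_const _
          · filter_upwards with y
            rw [norm_mul]
            exact mul_le_mul_of_nonneg_left (hK y) (norm_nonneg _)
      _ ≤ 2 * m * ∫ y, ‖u₀ y‖ := by
          rw [MeasureTheory.integral_mul_const]
          have hnc0 : ‖c0‖ = 1 / (2 * Real.pi) := by
            rw [hc0, Complex.norm_real, Real.norm_eq_abs, abs_of_pos (by positivity)]
          rw [hnc0]
          have hint : 0 ≤ ∫ y, ‖u₀ y‖ := integral_nonneg (fun y => norm_nonneg _)
          have hπ3 : (3:ℝ) < Real.pi := Real.pi_gt_three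
          have key : 1 / (2 * Real.pi) * (10 * m) ≤ 2 * m := by
            rw [div_mul_eq_mul_div, one_mul, div_le_iff₀ (by positivity)]
            nlinarith [hmpos]
          calc 1 / (2 * Real.pi) * ((∫ y, ‖u₀ y‖) * (10 * m))
              = (1 / (2 * Real.pi) * (10 * m)) * ∫ y, ‖u₀ y‖ := by ring
            _ ≤ (2 * m) * ∫ y, ‖u₀ y‖ := mul_le_mul_of_nonneg_right key hint
            _ = 2 * m * ∫ y, ‖u₀ y‖ := by ring
  -- pass to the limit
  have hlim : ‖∫ ξ, G ξ‖ ≤ 2 * m * ∫ y, ‖u₀ y‖ := by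
    apply le_of_tendsto htend.norm
    filter_upwards [eventually_ge_atTop (0:ℝ)] with R hR
    exact hbound R hR
  calc ‖∫ ξ, G ξ‖ ≤ 2 * m * ∫ y, ‖u₀ y‖ := hlim
    _ = 2 * t ^ (-(1:ℝ)/3) * ∫ y, ‖u₀ y‖ := by rw [hmdef]
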